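/- Let X and Y be smooth normed spaces over 𝔽 with unique compatible semi-inner products, and let f : X → Y be a surjective map satisfying |[f(x), f(y)]| = |[x, y]| for all x, y ∈ X. Then for all linearly independent x, y ∈ X there exist scalars α, β ∈ 𝔽 with |α| = |β| = 1 such that f(x + y) = α f(x) + β f(y). -/

import Mathlib

open RCLike

/-- A support functional at `x`: a norm-one continuous linear functional with `φ x = ‖x‖`. -/
def SuppFunc (𝕜 : Type*) [RCLike 𝕜] {X : Type*} [NormedAddCommGroup X] [NormedSpace 𝕜 X]
    (x : X) (φ : X →L[𝕜] 𝕜) : Prop :=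
  ‖φ‖ = 1 ∧ φ x = (‖x‖ : 𝕜)

/-- `X` is smooth at `x` if there is a unique support functional at `x`. -/
def NormSmoothAt (𝕜 : Type*) [RCLike 𝕜] {X : Type*} [NormedAddCommGroup X] [NormedSpace 𝕜 X]
    (x : X) : Prop := ∃! φ : X →L[𝕜] 𝕜, SuppFunc 𝕜 x φ

/-- `X` is smooth if it is smooth at every nonzero point. -/
def NormSmooth (𝕜 : Type*) (X : Type*) [RCLike 𝕜] [NormedAddCommGroup X] [NormedSpace 𝕜 X] :
    Prop := ∀ x : X, x ≠ 0 → NormSmoothAt 𝕜 x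

/-- `sip` is the canonical semi-inner product `[u,v] = ‖v‖ * φ_v u` built from support
functionals (on a smooth space this pins `sip` down uniquely). -/
def IsCompatSIP (𝕜 : Type*) {X : Type*} [RCLike 𝕜] [NormedAddCommGroup X] [NormedSpace 𝕜 X]
    (sip : X → X → 𝕜) : Prop :=
  (∀ u : X, sip u 0 = 0) ∧
  ∀ (u v : X) (φ : X →L[𝕜] 𝕜), SuppFunc 𝕜 v φ → sip u v = (‖v‖ : 𝕜) * φ u

/-- Birkhoff–James orthogonality: `x ⊥ y` iff `‖x + a • y‖ ≥ ‖x‖` for all scalars. -/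
def BJOrth (𝕜 : Type*) {X : Type*} [RCLike 𝕜] [NormedAddCommGroup X] [NormedSpace 𝕜 X]
    (x y : X) : Prop := ∀ a : 𝕜, ‖x‖ ≤ ‖x + a • y‖

/-- A semi-inner product compatible with the norm: additive and homogeneous in the first
variable, conjugate-homogeneous in the second, positive definite, Cauchy–Schwarz, and
`[x,x] = ‖x‖²`. -/
def IsSIP (𝕜 : Type*) {X : Type*} [RCLike 𝕜] [NormedAddCommGroup X] [NormedSpace 𝕜 X]
    (sip : X → X → 𝕜) : Prop :=
  (∀ x y z : X, sip (x + y) z = sip x z + sip y z) ∧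
  (∀ (a : 𝕜) (x y : X), sip (a • x) y = a * sip x y) ∧
  (∀ (a : 𝕜) (x y : X), sip x (a • y) = (starRingEnd 𝕜) a * sip x y) ∧
  (∀ x : X, x ≠ 0 → 0 < re (sip x x) ∧ im (sip x x) = 0) ∧
  (∀ x y : X, ‖sip x y‖ ≤ Real.sqrt (re (sip x x)) * Real.sqrt (re (sip y y))) ∧
  (∀ x : X, sip x x = (‖x‖ : 𝕜) ^ 2)

section Aux

variable {𝕜 : Type*} [RCLike 𝕜] {E : Type*} [NormedAddCommGroup E] [NormedSpace 𝕜 E]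

lemma suppFunc_norm_sip {sip : E → E → 𝕜} (h : IsCompatSIP 𝕜 sip)
    {v : E} {φ : E →L[𝕜] 𝕜} (hφ : SuppFunc 𝕜 v φ) (u : E) :
    ‖sip u v‖ = ‖v‖ * ‖φ u‖ := by
  rw [h.2 u v φ hφ, norm_mul, RCLike.norm_ofReal, abs_of_nonneg (norm_nonneg v)]

lemma sip_self_norm (hsm : NormSmooth 𝕜 E) {sip : E → E → 𝕜} (h : IsCompatSIP 𝕜 sip) (v : E) :
    ‖sip v v‖ = ‖v‖ ^ 2 := by
  rcases eq_or_ne v 0 with rfl | hv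
  · simp [h.1]
  · obtain ⟨φ, hφ, -⟩ := hsm v hv
    rw [suppFunc_norm_sip h hφ, hφ.2, RCLike.norm_ofReal, abs_of_nonneg (norm_nonneg v), sq]

/-- Master lemma: if `z ∉ span {a, b}`, there is a support functional (at some nonzero point)
vanishing on `a` and `b` but not on `z`. Uses finite-dimensional norm attainment + Hahn-Banach. -/
lemma master_suppfunc {a b z : E} (hz : z ∉ Submodule.span 𝕜 ({a, b} : Set E)) :
    ∃ (w : E) (φ : E →L[𝕜] 𝕜), w ≠ 0 ∧ SuppFunc 𝕜 w φ ∧ φ a = 0 ∧ φ b = 0 ∧ φ z ≠ 0 := by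
  classical
  set N : Submodule 𝕜 E := Submodule.span 𝕜 ({a, b, z} : Set E) with hN
  haveI : FiniteDimensional 𝕜 N := FiniteDimensional.span_of_finite 𝕜 (Set.toFinite _)
  have haN : a ∈ N := Submodule.subset_span (by simp)
  have hbN : b ∈ N := Submodule.subset_span (by simp)
  have hzN : z ∈ N := Submodule.subset_span (by simp)
  set a' : N := ⟨a, haN⟩ with ha'
  set b' : N := ⟨b, hbN⟩ with hb'
  set z' : N := ⟨z, hzN⟩ with hz'
  set M : Submodule 𝕜 N := Submodule.span 𝕜 {a', b'} with hM
  have hzM : z' ∉ M := by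
    intro hmem
    apply hz
    have h2 : (z' : E) ∈ (M.map N.subtype) := Submodule.mem_map_of_mem hmem
    rwa [hM, Submodule.map_span, Set.image_insert_eq, Set.image_singleton,
      Submodule.coe_subtype] at h2
  have hq : M.mkQ z' ≠ 0 := by
    simpa [Submodule.mkQ_apply, Submodule.Quotient.mk_eq_zero] using hzM
  have hdual : ∃ g : Module.Dual 𝕜 (N ⧸ M), g (M.mkQ z') ≠ 0 := by
    by_contra hcon
    push_neg at hcon
    exact hq ((Module.forall_dual_apply_eq_zero_iff 𝕜 _).1 hcon)
  obtain ⟨g, hg⟩ := hdual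
  set ψ : N →L[𝕜] 𝕜 := LinearMap.toContinuousLinearMap (g.comp M.mkQ) with hψ
  have hψ_apply : ∀ u : N, ψ u = g (M.mkQ u) := fun u => rfl
  have hψa : ψ a' = 0 := by
    have hm : M.mkQ a' = 0 := by
      simpa [Submodule.mkQ_apply, Submodule.Quotient.mk_eq_zero] using
        (Submodule.subset_span (show a' ∈ ({a', b'} : Set N) by simp) : a' ∈ M)
    rw [hψ_apply, hm, map_zero]
  have hψb : ψ b' = 0 := by
    have hm : M.mkQ b' = 0 := by
      simpa [Submodule.mkQ_apply, Submodule.Quotient.mk_eq_zero] using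
        (Submodule.subset_span (show b' ∈ ({a', b'} : Set N) by simp) : b' ∈ M)
    rw [hψ_apply, hm, map_zero]
  have hψz : ψ z' ≠ 0 := by rw [hψ_apply]; exact hg
  -- attain the norm of ψ on the closed unit ball of N
  obtain ⟨w₀, hw₀mem, hmax⟩ := (isCompact_closedBall (0 : N) 1).exists_isMaxOn
    ⟨0, Metric.mem_closedBall_self zero_le_one⟩
    ((continuous_norm.comp ψ.continuous).continuousOn)
  have hw₀le : ‖w₀‖ ≤ 1 := by simpa using mem_closedBall_zero_iff.1 hw₀mem
  have hle : ‖ψ‖ ≤ ‖ψ w₀‖ := by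
    refine ψ.opNorm_le_bound (norm_nonneg _) (fun u => ?_)
    rcases eq_or_ne u 0 with rfl | hu
    · simp
    · have hnu : (0:ℝ) < ‖u‖ := norm_pos_iff.2 hu
      have hmem : ((‖u‖ : 𝕜)⁻¹ • u) ∈ Metric.closedBall (0 : N) 1 := by
        rw [mem_closedBall_zero_iff, norm_smul, norm_inv, RCLike.norm_ofReal,
          abs_of_nonneg (norm_nonneg u), inv_mul_cancel₀ hnu.ne']
      have h3 : ‖u‖⁻¹ * ‖ψ u‖ ≤ ‖ψ w₀‖ := by
        have := hmax hmem
        simpa [Set.mem_setOf_eq, Function.comp_apply, map_smul, norm_smul, norm_inv,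
          RCLike.norm_ofReal, abs_of_nonneg (norm_nonneg u)] using this
      have h4 := mul_le_mul_of_nonneg_left h3 hnu.le
      rw [← mul_assoc, mul_inv_cancel₀ hnu.ne', one_mul] at h4
      exact h4.trans_eq (mul_comm _ _)
  have hge : ‖ψ w₀‖ ≤ ‖ψ‖ := by
    calc ‖ψ w₀‖ ≤ ‖ψ‖ * ‖w₀‖ := ψ.le_opNorm w₀
      _ ≤ ‖ψ‖ * 1 := mul_le_mul_of_nonneg_left hw₀le (norm_nonneg ψ)
      _ = ‖ψ‖ := mul_one _
  have hψw₀ : ψ w₀ ≠ 0 := by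
    intro h0
    apply hψz
    have hz0 : ‖ψ‖ = 0 := le_antisymm (by simpa [h0] using hle) (norm_nonneg ψ)
    have hle2 : ‖ψ z'‖ ≤ ‖ψ‖ * ‖z'‖ := ψ.le_opNorm z'
    rw [hz0, zero_mul] at hle2
    exact norm_le_zero_iff.1 hle2
  have hnormeq : ‖ψ‖ = ‖ψ w₀‖ := le_antisymm hle hge
  have hw₀pos : (0:ℝ) < ‖ψ w₀‖ := norm_pos_iff.2 hψw₀
  have hw₀1 : ‖w₀‖ = 1 := by
    refine le_antisymm hw₀le ?_
    have h1 : ‖ψ w₀‖ * 1 ≤ ‖ψ w₀‖ * ‖w₀‖ := by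
      calc ‖ψ w₀‖ * 1 = ‖ψ w₀‖ := mul_one _
        _ ≤ ‖ψ‖ * ‖w₀‖ := ψ.le_opNorm w₀
        _ = ‖ψ w₀‖ * ‖w₀‖ := by rw [hnormeq]
    exact (mul_le_mul_iff_right₀ hw₀pos).1 h1
  set Φ₀ : N →L[𝕜] 𝕜 := (ψ w₀)⁻¹ • ψ with hΦ₀
  have hΦ₀w₀ : Φ₀ w₀ = 1 := by
    rw [hΦ₀]
    simp [inv_mul_cancel₀ hψw₀]
  have hΦ₀norm : ‖Φ₀‖ = 1 := by
    refine le_antisymm (Φ₀.opNorm_le_bound zero_le_one (fun u => ?_)) ?_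
    · have h1 : ‖Φ₀ u‖ = ‖ψ w₀‖⁻¹ * ‖ψ u‖ := by
        rw [hΦ₀, ContinuousLinearMap.smul_apply, smul_eq_mul, norm_mul, norm_inv]
      rw [h1, one_mul]
      have h2 : ‖ψ u‖ ≤ ‖ψ w₀‖ * ‖u‖ := by
        calc ‖ψ u‖ ≤ ‖ψ‖ * ‖u‖ := ψ.le_opNorm u
          _ = ‖ψ w₀‖ * ‖u‖ := by rw [hnormeq]
      calc ‖ψ w₀‖⁻¹ * ‖ψ u‖ ≤ ‖ψ w₀‖⁻¹ * (‖ψ w₀‖ * ‖u‖) :=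
            mul_le_mul_of_nonneg_left h2 (inv_nonneg.2 hw₀pos.le)
        _ = ‖u‖ := by field_simp
    · calc (1:ℝ) = ‖Φ₀ w₀‖ := by rw [hΦ₀w₀, norm_one]
        _ ≤ ‖Φ₀‖ * ‖w₀‖ := Φ₀.le_opNorm w₀
        _ = ‖Φ₀‖ := by rw [hw₀1, mul_one]
  obtain ⟨Φ, hΦext, hΦnorm⟩ := exists_extension_norm_eq N Φ₀
  refine ⟨(w₀ : E), Φ, ?_, ⟨hΦnorm.trans hΦ₀norm, ?_⟩, ?_, ?_, ?_⟩
  · intro h0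
    have : ‖(w₀ : E)‖ = 0 := by rw [h0, norm_zero]
    rw [show ‖(w₀ : E)‖ = ‖w₀‖ from rfl, hw₀1] at this
    exact one_ne_zero this
  · rw [hΦext w₀, hΦ₀w₀, show ‖(w₀ : E)‖ = ‖w₀‖ from rfl, hw₀1]
    norm_num
  · have := hΦext a'
    rw [this, hΦ₀]
    simp [hψa]
  · have := hΦext b'
    rw [this, hΦ₀]
    simp [hψb]
  · have := hΦext z'
    rw [show z = (z' : E) from rfl, this, hΦ₀]
    simp only [ContinuousLinearMap.smul_apply, smul_eq_mul]
    exact mul_ne_zero (inv_ne_zero hψw₀) hψz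

end Aux

theorem stmt8 {𝕜 : Type*} [RCLike 𝕜] {X Y : Type*} [NormedAddCommGroup X] [NormedSpace 𝕜 X]
    [NormedAddCommGroup Y] [NormedSpace 𝕜 Y]
    (hsmX : NormSmooth 𝕜 X) (hsmY : NormSmooth 𝕜 Y)
    (sipX : X → X → 𝕜) (hX : IsCompatSIP 𝕜 sipX)
    (sipY : Y → Y → 𝕜) (hY : IsCompatSIP 𝕜 sipY)
    (f : X → Y) (hsurj : Function.Surjective f)
    (hf : ∀ x y : X, ‖sipY (f x) (f y)‖ = ‖sipX x y‖) :
    ∀ x y : X, LinearIndependent 𝕜 ![x, y] →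
      ∃ α β : 𝕜, ‖α‖ = 1 ∧ ‖β‖ = 1 ∧ f (x + y) = α • f x + β • f y := by
  -- norm preservation
  have hnorm : ∀ u, ‖f u‖ = ‖u‖ := by
    intro u
    have h := hf u u
    rw [sip_self_norm hsmY hY, sip_self_norm hsmX hX] at h
    nlinarith [norm_nonneg (f u), norm_nonneg u]
  -- transfer of support functional values
  have htrans : ∀ (v : X), v ≠ 0 → ∀ (φv : X →L[𝕜] 𝕜), SuppFunc 𝕜 v φv →
      ∀ (φw : Y →L[𝕜] 𝕜), SuppFunc 𝕜 (f v) φw → ∀ u, ‖φw (f u)‖ = ‖φv u‖ := by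
    intro v hv φv hφv φw hφw u
    have h1 : ‖sipY (f u) (f v)‖ = ‖f v‖ * ‖φw (f u)‖ := suppFunc_norm_sip hY hφw _
    have h2 : ‖sipX u v‖ = ‖v‖ * ‖φv u‖ := suppFunc_norm_sip hX hφv _
    have h3 := hf u v
    rw [h1, h2, hnorm v] at h3
    exact mul_left_cancel₀ (norm_ne_zero_iff.2 hv) h3
  intro x y hind
  obtain ⟨hy0, hax⟩ := linearIndependent_fin2.1 hind
  simp only [Matrix.cons_val_one, Matrix.head_cons, Matrix.cons_val_zero] at hy0 hax
  have hx0 : x ≠ 0 := fun h => hax 0 (by rw [h, zero_smul])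
  have hxy0 : x + y ≠ 0 := by
    intro h
    exact hax (-1) (by rw [neg_smul, one_smul, eq_comm, ← add_eq_zero_iff_eq_neg, h])
  have hxny : x ∉ Submodule.span 𝕜 ({y} : Set X) := by
    intro hmem
    obtain ⟨l, hl⟩ := Submodule.mem_span_singleton.1 hmem
    exact hax l hl
  have hynx : y ∉ Submodule.span 𝕜 ({x} : Set X) := by
    intro hmem
    obtain ⟨l, hl⟩ := Submodule.mem_span_singleton.1 hmem
    have hl0 : l ≠ 0 := by
      intro h; rw [h, zero_smul] at hl; exact hy0 hl.symm
    exact hax l⁻¹ (by rw [← hl, smul_smul, inv_mul_cancel₀ hl0, one_smul])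
  -- preimages of nonzero vectors are nonzero
  have hvne : ∀ v : X, f v ≠ 0 → v ≠ 0 := fun v h hv => by
    apply h; rw [← norm_eq_zero, hnorm, hv, norm_zero]
  have hfne : ∀ v : X, v ≠ 0 → f v ≠ 0 := fun v hv => by
    rw [← norm_ne_zero_iff, hnorm]; exact norm_ne_zero_iff.2 hv
  -- Step 1 : f (x+y) ∈ span {f x, f y}
  have hCspan : f (x + y) ∈ Submodule.span 𝕜 ({f x, f y} : Set Y) := by
    by_contra hC
    obtain ⟨w, φ, hw0, hφ, hφA, hφB, hφC⟩ := master_suppfunc hC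
    obtain ⟨v, rfl⟩ := hsurj w
    have hv0 : v ≠ 0 := hvne v hw0
    obtain ⟨φv, hφv, -⟩ := hsmX v hv0
    have tx := htrans v hv0 φv hφv φ hφ x
    have ty := htrans v hv0 φv hφv φ hφ y
    have txy := htrans v hv0 φv hφv φ hφ (x + y)
    have hvx : φv x = 0 := by rw [← norm_eq_zero, ← tx, hφA, norm_zero]
    have hvy : φv y = 0 := by rw [← norm_eq_zero, ← ty, hφB, norm_zero]
    apply hφC
    rw [← norm_eq_zero, txy, map_add, hvx, hvy, add_zero, norm_zero]
  obtain ⟨α, β, hαβ⟩ := Submodule.mem_span_pair.1 hCspan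
  -- Step 2 : f x ∉ span {f y}, f y ∉ span {f x}
  have hAns : f x ∉ Submodule.span 𝕜 ({f y} : Set Y) := by
    intro hmem
    obtain ⟨l, hl⟩ := Submodule.mem_span_singleton.1 hmem
    have hxny' : x ∉ Submodule.span 𝕜 ({y, y} : Set X) := by
      rwa [Set.pair_eq_singleton]
    obtain ⟨v, φv, hv0, hφv, hφvy, -, hφvx⟩ := master_suppfunc hxny'
    obtain ⟨φw, hφw, -⟩ := hsmY (f v) (hfne v hv0)
    have tx := htrans v hv0 φv hφv φw hφw x
    have ty := htrans v hv0 φv hφv φw hφw y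
    have hby : φw (f y) = 0 := by rw [← norm_eq_zero, ty, hφvy, norm_zero]
    have hA : φw (f x) ≠ 0 := by
      rw [← norm_ne_zero_iff, tx]; exact norm_ne_zero_iff.2 hφvx
    apply hA
    rw [← hl, map_smul, hby, smul_zero]
  have hBns : f y ∉ Submodule.span 𝕜 ({f x} : Set Y) := by
    intro hmem
    obtain ⟨l, hl⟩ := Submodule.mem_span_singleton.1 hmem
    have hynx' : y ∉ Submodule.span 𝕜 ({x, x} : Set X) := by
      rwa [Set.pair_eq_singleton]
    obtain ⟨v, φv, hv0, hφv, hφvx, -, hφvy⟩ := master_suppfunc hynx'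
    obtain ⟨φw, hφw, -⟩ := hsmY (f v) (hfne v hv0)
    have tx := htrans v hv0 φv hφv φw hφw x
    have ty := htrans v hv0 φv hφv φw hφw y
    have hbx : φw (f x) = 0 := by rw [← norm_eq_zero, tx, hφvx, norm_zero]
    have hB : φw (f y) ≠ 0 := by
      rw [← norm_ne_zero_iff, ty]; exact norm_ne_zero_iff.2 hφvy
    apply hB
    rw [← hl, map_smul, hbx, smul_zero]
  -- Step 3 : |α| = 1
  have hα1 : ‖α‖ = 1 := by
    have hAns' : f x ∉ Submodule.span 𝕜 ({f y, f y} : Set Y) := by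
      rwa [Set.pair_eq_singleton]
    obtain ⟨w, φ, hw0, hφ, hφB, -, hφA⟩ := master_suppfunc hAns'
    obtain ⟨v, rfl⟩ := hsurj w
    have hv0 : v ≠ 0 := hvne v hw0
    obtain ⟨φv, hφv, -⟩ := hsmX v hv0
    have tx := htrans v hv0 φv hφv φ hφ x
    have ty := htrans v hv0 φv hφv φ hφ y
    have txy := htrans v hv0 φv hφv φ hφ (x + y)
    have hvy : φv y = 0 := by rw [← norm_eq_zero, ← ty, hφB, norm_zero]
    have hC : φ (f (x + y)) = α * φ (f x) := by
      rw [← hαβ, map_add, map_smul, map_smul, hφB, smul_zero, add_zero, smul_eq_mul]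
    have hnormC : ‖φ (f (x + y))‖ = ‖φ (f x)‖ := by
      rw [txy, map_add, hvy, add_zero, ← tx]
    rw [hC, norm_mul] at hnormC
    have hA0 : ‖φ (f x)‖ ≠ 0 := norm_ne_zero_iff.2 hφA
    field_simp at hnormC
    exact hnormC
  -- Step 4 : |β| = 1
  have hβ1 : ‖β‖ = 1 := by
    have hBns' : f y ∉ Submodule.span 𝕜 ({f x, f x} : Set Y) := by
      rwa [Set.pair_eq_singleton]
    obtain ⟨w, φ, hw0, hφ, hφA, -, hφB⟩ := master_suppfunc hBns'
    obtain ⟨v, rfl⟩ := hsurj w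
    have hv0 : v ≠ 0 := hvne v hw0
    obtain ⟨φv, hφv, -⟩ := hsmX v hv0
    have tx := htrans v hv0 φv hφv φ hφ x
    have ty := htrans v hv0 φv hφv φ hφ y
    have txy := htrans v hv0 φv hφv φ hφ (x + y)
    have hvx : φv x = 0 := by rw [← norm_eq_zero, ← tx, hφA, norm_zero]
    have hC : φ (f (x + y)) = β * φ (f y) := by
      rw [← hαβ, map_add, map_smul, map_smul, hφA, smul_zero, zero_add, smul_eq_mul]
    have hnormC : ‖φ (f (x + y))‖ = ‖φ (f y)‖ := by
      rw [txy, map_add, hvx, zero_add, ← ty]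
    rw [hC, norm_mul] at hnormC
    have hB0 : ‖φ (f y)‖ ≠ 0 := norm_ne_zero_iff.2 hφB
    field_simp at hnormC
    exact hnormC
  exact ⟨α, β, hα1, hβ1, hαβ.symm⟩
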